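/- For every h ≥ 3, there exists a (K_2,S(C_h))-URGDD(0,2) of C_{h(2)}: the edge set of the graph C_{h(2)} can be decomposed into two parallel classes, each consisting of a single h-sun spanning all 2h vertices. -/

import Mathlib

open SimpleGraph

/-- The `h`-sun `S(C_h)`: an `h`-cycle on the vertices `Sum.inl i` together with
a pendant edge from each cycle vertex `Sum.inl i` to the pendant vertex `Sum.inr i`. -/
def sunGraph (h : ℕ) : SimpleGraph (Fin h ⊕ Fin h) :=
  SimpleGraph.fromRel fun u w =>
    (∃ i j : Fin h, u = Sum.inl i ∧ w = Sum.inl j ∧ (i.val + 1) % h = j.val) ∨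
    (∃ i : Fin h, u = Sum.inl i ∧ w = Sum.inr i)

/-- `H` is a parallel class of `h`-suns: `H` is the vertex-disjoint union of
copies of the `h`-sun, and every vertex lies in exactly one copy. -/
def IsSunClass (h : ℕ) {V : Type*} (H : SimpleGraph V) : Prop :=
  ∃ (k : ℕ) (φ : Fin k → Fin h ⊕ Fin h → V),
    (∀ x : V, ∃! p : Fin k × (Fin h ⊕ Fin h), φ p.1 p.2 = x) ∧
    ∀ x y, H.Adj x y ↔ ∃ a u w, (sunGraph h).Adj u w ∧ φ a u = x ∧ φ a w = y

/-- `H` is a parallel class of copies of `K₂`, i.e. a perfect matching: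
every vertex is adjacent to exactly one other vertex. -/
def IsMatchingClass {V : Type*} (H : SimpleGraph V) : Prop :=
  ∀ x : V, ∃! y : V, H.Adj x y

/-- A `(K₂, S(C_h))`-URGDD`(r,s)` of the graph `G`: a decomposition of the
edge set of `G` into `r` parallel classes of single edges (perfect matchings)
and `s` parallel classes of `h`-suns. -/
def IsURGDD {V : Type*} (G : SimpleGraph V) (h r s : ℕ) : Prop :=
  ∃ C : Fin r ⊕ Fin s → SimpleGraph V,
    (∀ i, C i ≤ G) ∧
    (∀ x y, G.Adj x y → ∃! i, (C i).Adj x y) ∧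
    (∀ i : Fin r, IsMatchingClass (C (Sum.inl i))) ∧
    (∀ j : Fin s, IsSunClass h (C (Sum.inr j)))

/-- A `(K₂, S(C_h))`-URD`(v;r,s)`: a uniformly resolvable decomposition of the
complete graph `K_v` into `r` perfect matchings and `s` parallel classes of `h`-suns. -/
def IsURD (v h r s : ℕ) : Prop :=
  IsURGDD (⊤ : SimpleGraph (Fin v)) h r s

/-- The graph `C_{m(n)}`: vertex set is `m` groups of size `n`, with all edges
between groups `i` and `j` whenever `|i - j| ≡ 1 (mod m)`. -/
def cycleBlowup (m n : ℕ) : SimpleGraph (Fin m × Fin n) :=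
  SimpleGraph.fromRel fun u w => (u.1.val + 1) % m = w.1.val

namespace Stmt9

variable {h : ℕ}

def scc (hp : 0 < h) (i : Fin h) : Fin h := ⟨(i.val + 1) % h, Nat.mod_lt _ hp⟩

def flp (j : Fin 2) : Fin 2 := ⟨1 - j.val, by omega⟩

lemma succ_mod {a : ℕ} (ha : a < h) : (a + 1) % h = if a + 1 = h then 0 else a + 1 := by
  by_cases hs : a + 1 = h
  · simp [hs]
  · rw [if_neg hs]; exact Nat.mod_eq_of_lt (by omega)

lemma scc_inj (hp : 0 < h) {i i' : Fin h} (e : scc hp i = scc hp i') : i = i' := by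
  have := congrArg Fin.val e
  simp only [scc] at this
  rw [succ_mod i.isLt, succ_mod i'.isLt] at this
  have hi := i.isLt; have hi' := i'.isLt
  apply Fin.ext
  split_ifs at this <;> omega

lemma scc_surj (hp : 0 < h) (i : Fin h) : ∃ i', scc hp i' = i := by
  have hi := i.isLt
  by_cases h0 : i.val = 0
  · refine ⟨⟨h - 1, by omega⟩, Fin.ext ?_⟩
    show (h - 1 + 1) % h = i.val
    rw [(by omega : h - 1 + 1 = h), Nat.mod_self, h0]
  · refine ⟨⟨i.val - 1, by omega⟩, Fin.ext ?_⟩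
    show (i.val - 1 + 1) % h = i.val
    rw [(by omega : i.val - 1 + 1 = i.val), Nat.mod_eq_of_lt hi]

lemma scc_ne (hh : 2 ≤ h) (i : Fin h) : scc (by omega) i ≠ i := by
  intro e
  have := congrArg Fin.val e
  simp only [scc] at this
  rw [succ_mod i.isLt] at this
  have hi := i.isLt
  split_ifs at this <;> omega

lemma scc_scc_ne (hh : 3 ≤ h) (i : Fin h) : scc (by omega) (scc (by omega) i) ≠ i := by
  intro e
  have := congrArg Fin.val e
  simp only [scc] at this
  have hi := i.isLt
  rw [succ_mod i.isLt] at this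
  split_ifs at this with hs
  · rw [succ_mod (by omega)] at this
    split_ifs at this <;> omega
  · rw [succ_mod (by omega)] at this
    split_ifs at this <;> omega


lemma flp_ne (j : Fin 2) : flp j ≠ j := by revert j; decide

lemma eq_or_eq_flp (c j : Fin 2) : c = j ∨ c = flp j := by revert c j; decide

def emb (hp : 0 < h) (j : Fin 2) : (Fin h ⊕ Fin h) ↪ Fin h × Fin 2 where
  toFun := Sum.elim (fun i => (i, j)) (fun i => (scc hp i, flp j))
  inj' := by
    rintro (a | a) (b | b) e <;>
      simp only [Sum.elim_inl, Sum.elim_inr, Prod.mk.injEq] at e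
    · rw [e.1]
    · exact absurd e.2.symm (flp_ne j)
    · exact absurd e.2 (flp_ne j)
    · rw [scc_inj hp e.1]

lemma mapG_adj (hh : 3 ≤ h) (hp : 0 < h) (j : Fin 2) (x y : Fin h × Fin 2) :
    ((sunGraph h).map (emb hp j)).Adj x y ↔
      (x.2 = j ∧ y.1 = scc hp x.1) ∨ (y.2 = j ∧ x.1 = scc hp y.1) := by
  rw [map_adj]
  constructor
  · rintro ⟨u, w, huw, hu, hw⟩
    obtain ⟨hne, hrel⟩ := huw
    rcases hrel with (⟨i, i', hui, hwi, hmod⟩ | ⟨i, hui, hwi⟩) |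
        (⟨i, i', hwi, hui, hmod⟩ | ⟨i, hwi, hui⟩) <;>
      subst hui <;> subst hwi <;>
      simp only [emb, Function.Embedding.coeFn_mk, DFunLike.coe, Sum.elim_inl, Sum.elim_inr] at hu hw <;>
      subst hu <;> subst hw
    · exact Or.inl ⟨rfl, (Fin.ext hmod.symm : _ = scc hp i)⟩
    · exact Or.inl ⟨rfl, rfl⟩
    · exact Or.inr ⟨rfl, (Fin.ext hmod.symm : _ = scc hp i)⟩
    · exact Or.inr ⟨rfl, rfl⟩
  · obtain ⟨x1, x2⟩ := x
    obtain ⟨y1, y2⟩ := y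
    rintro (⟨hx2, hy1⟩ | ⟨hy2, hx1⟩)
    · -- case 1
      dsimp only at hx2 hy1; subst hx2; subst hy1
      rcases eq_or_eq_flp y2 x2 with hy2 | hy2 <;> subst hy2
      · exact ⟨Sum.inl x1, Sum.inl (scc hp x1),
          ⟨fun e => scc_ne (by omega) x1 (Sum.inl.inj e).symm,
            Or.inl (Or.inl ⟨x1, scc hp x1, rfl, rfl, rfl⟩)⟩, rfl, rfl⟩
      · exact ⟨Sum.inl x1, Sum.inr x1,
          ⟨by simp, Or.inl (Or.inr ⟨x1, rfl, rfl⟩)⟩, rfl, rfl⟩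
    · -- case 2
      dsimp only at hy2 hx1; subst hy2; subst hx1
      rcases eq_or_eq_flp x2 y2 with hx2 | hx2 <;> subst hx2
      · exact ⟨Sum.inl (scc hp y1), Sum.inl y1,
          ⟨fun e => scc_ne (by omega) y1 (Sum.inl.inj e),
            Or.inr (Or.inl ⟨y1, scc hp y1, rfl, rfl, rfl⟩)⟩, rfl, rfl⟩
      · exact ⟨Sum.inr y1, Sum.inl y1,
          ⟨by simp, Or.inr (Or.inr ⟨y1, rfl, rfl⟩)⟩, rfl, rfl⟩


lemma cb_adj (hh : 3 ≤ h) (hp : 0 < h) (x y : Fin h × Fin 2) :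
    (cycleBlowup h 2).Adj x y ↔ y.1 = scc hp x.1 ∨ x.1 = scc hp y.1 := by
  constructor
  · rintro ⟨hne, hrel | hrel⟩
    · exact Or.inl (Fin.ext hrel.symm)
    · exact Or.inr (Fin.ext hrel.symm)
  · rintro (e | e)
    · refine ⟨fun q => scc_ne (by omega) x.1 ?_, Or.inl (congrArg Fin.val e).symm⟩
      exact ((congrArg Prod.fst q).trans e).symm
    · refine ⟨fun q => scc_ne (by omega) y.1 ?_, Or.inr (congrArg Fin.val e).symm⟩
      exact ((congrArg Prod.fst q.symm).trans e).symm

end Stmt9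


/-- For every `h ≥ 3` there exists a `(K₂, S(C_h))`-URGDD`(0,2)` of `C_{h(2)}`:
a decomposition of `C_{h(2)}` into two parallel classes of `h`-suns. -/
theorem stmt_9 (h : ℕ) (hh : 3 ≤ h) : IsURGDD (cycleBlowup h 2) h 0 2 := by
  have hp : 0 < h := by omega
  refine ⟨Sum.elim (fun i => i.elim0) (fun j => (sunGraph h).map (Stmt9.emb hp j)),
    ?_, ?_, ?_, ?_⟩
  · rintro (i | j)
    · exact i.elim0
    · intro x y hxy
      rw [Sum.elim_inr, Stmt9.mapG_adj hh hp] at hxy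
      rw [Stmt9.cb_adj hh hp]
      rcases hxy with ⟨_, e⟩ | ⟨_, e⟩
      · exact Or.inl e
      · exact Or.inr e
  · intro x y hxy
    rw [Stmt9.cb_adj hh hp] at hxy
    rcases hxy with e | e
    · refine ⟨Sum.inr x.2, ?_, ?_⟩
      · show ((sunGraph h).map (Stmt9.emb hp x.2)).Adj x y
        rw [Stmt9.mapG_adj hh hp]
        exact Or.inl ⟨rfl, e⟩
      · rintro (i | j') hi
        · exact i.elim0
        · have hi' : ((sunGraph h).map (Stmt9.emb hp j')).Adj x y := hi
          rw [Stmt9.mapG_adj hh hp] at hi'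
          clear hi
          rename' hi' => hi
          rcases hi with ⟨h2, _⟩ | ⟨_, e'⟩
          · exact congrArg Sum.inr h2.symm
          · rw [e] at e'
            exact absurd e'.symm (Stmt9.scc_scc_ne hh x.1)
    · refine ⟨Sum.inr y.2, ?_, ?_⟩
      · show ((sunGraph h).map (Stmt9.emb hp y.2)).Adj x y
        rw [Stmt9.mapG_adj hh hp]
        exact Or.inr ⟨rfl, e⟩
      · rintro (i | j') hi
        · exact i.elim0
        · have hi' : ((sunGraph h).map (Stmt9.emb hp j')).Adj x y := hi
          rw [Stmt9.mapG_adj hh hp] at hi'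
          clear hi
          rename' hi' => hi
          rcases hi with ⟨_, e'⟩ | ⟨h2, _⟩
          · rw [e] at e'
            exact absurd e'.symm (Stmt9.scc_scc_ne hh y.1)
          · exact congrArg Sum.inr h2.symm
  · intro i; exact i.elim0
  · intro j
    refine ⟨1, fun _ => Stmt9.emb hp j, ?_, ?_⟩
    · intro x
      obtain ⟨x1, x2⟩ := x
      rcases Stmt9.eq_or_eq_flp x2 j with h2 | h2
      · refine ⟨(0, Sum.inl x1), ?_, ?_⟩
        · show (x1, j) = (x1, x2)
          rw [h2]
        · rintro ⟨a, u | u⟩ hu <;>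
            simp only [Stmt9.emb, Function.Embedding.coeFn_mk, DFunLike.coe, Sum.elim_inl, Sum.elim_inr,
              Prod.mk.injEq] at hu
          · exact Prod.ext (Subsingleton.elim _ _) (congrArg Sum.inl hu.1)
          · exact absurd (hu.2.trans h2) (Stmt9.flp_ne _)
      · obtain ⟨u, hu⟩ := Stmt9.scc_surj hp x1
        refine ⟨(0, Sum.inr u), ?_, ?_⟩
        · show (Stmt9.scc hp u, Stmt9.flp j) = (x1, x2)
          rw [hu, ← h2]
        · rintro ⟨a, v | v⟩ hv <;>
            simp only [Stmt9.emb, Function.Embedding.coeFn_mk, DFunLike.coe, Sum.elim_inl, Sum.elim_inr,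
              Prod.mk.injEq] at hv
          · exact absurd (hv.2.trans h2).symm (Stmt9.flp_ne _)
          · exact Prod.ext (Subsingleton.elim _ _)
              (congrArg Sum.inr (Stmt9.scc_inj hp (hv.1.trans hu.symm)))
    · intro x y
      rw [Sum.elim_inr, map_adj]
      constructor
      · rintro ⟨u, w, hadj, hu, hw⟩
        exact ⟨0, u, w, hadj, hu, hw⟩
      · rintro ⟨a, u, w, hadj, hu, hw⟩
        exact ⟨u, w, hadj, hu, hw⟩
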